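/- Suppose every edge of a 2-layer drawing (<_X, <_★) has at most k crossings. Then for any valley ⟨w, y, x⟩ (two edges (w,y) and (x,y) with w <_X x), the number of intrusive edges, i.e., edges (x', y') with y' ≠ y and w <_X x' <_X x, is at most 2k. -/
import Mathlib


open scoped Classical

/-- If every edge of the 2-layer drawing `(<ₓ, <⋆)` has at most `k` crossings, then
for any valley `⟨w, y, x⟩` (edges `(w, y)` and `(x, y)` with `w <ₓ x`), the number of
intrusive edges, i.e. edges `(x', y')` with `y' ≠ y` and `w <ₓ x' <ₓ x`, is at
most `2 * k`. -/
theorem valley_intrusive_edges_le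
    {X Y : Type*} [LinearOrder X] [LinearOrder Y]
    (E : Finset (X × Y)) (k : ℕ)
    (cross : X × Y → X × Y → Prop)
    (hcross : ∀ e f : X × Y,
      cross e f ↔ ((e.1 < f.1 ∧ f.2 < e.2) ∨ (f.1 < e.1 ∧ e.2 < f.2)))
    (hk : ∀ e ∈ E, (E.filter (fun f => cross e f)).card ≤ k)
    (w x : X) (y : Y) (hwy : (w, y) ∈ E) (hxy : (x, y) ∈ E) (hwx : w < x) :
    (E.filter (fun f => f.2 ≠ y ∧ w < f.1 ∧ f.1 < x)).card ≤ 2 * k := by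
  have hsub : E.filter (fun f => f.2 ≠ y ∧ w < f.1 ∧ f.1 < x) ⊆
      E.filter (fun f => cross (w, y) f) ∪ E.filter (fun f => cross (x, y) f) := by
    intro f hf
    simp only [Finset.mem_filter, Finset.mem_union] at hf ⊢
    obtain ⟨hfE, hne, hwf, hfx⟩ := hf
    rcases lt_or_gt_of_ne hne with h | h
    · exact Or.inl ⟨hfE, (hcross _ _).2 (Or.inl ⟨hwf, h⟩)⟩
    · exact Or.inr ⟨hfE, (hcross _ _).2 (Or.inr ⟨hfx, h⟩)⟩
  calc (E.filter (fun f => f.2 ≠ y ∧ w < f.1 ∧ f.1 < x)).card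
      ≤ (E.filter (fun f => cross (w, y) f) ∪ E.filter (fun f => cross (x, y) f)).card :=
        Finset.card_le_card hsub
    _ ≤ (E.filter (fun f => cross (w, y) f)).card + (E.filter (fun f => cross (x, y) f)).card :=
        Finset.card_union_le _ _
    _ ≤ k + k := add_le_add (hk _ hwy) (hk _ hxy)
    _ = 2 * k := (two_mul k).symm
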